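/- Define the sequences X* and Q* as follows. For each integer ℓ ≥ 2 let n_ℓ := ℓ·⌈(ln ℓ)²⌉+1, θ_ℓ := π/(2(n_ℓ−1)), and for 0 ≤ j ≤ n_ℓ−1 let x_{ℓ,j} := (cos(jθ_ℓ), sin(jθ_ℓ)) if ℓ is even, x_{ℓ,j} := (sin(jθ_ℓ), cos(jθ_ℓ)) if ℓ is odd. Let α := ∑_{m=2}^∞ 1/(m (ln m)²), δ_ℓ := 1/(α ℓ (ln ℓ)²), z_ℓ := ∑_{m=2}^ℓ δ_m, z_{ℓ,j} := 1 − δ_ℓ·cot((j+1)θ_ℓ) for 0 ≤ j ≤ n_ℓ−2 and z_{ℓ,n_ℓ−1} := 1. For even ℓ set q_{ℓ,j} := (z_ℓ, z_{ℓ,j}); for odd ℓ set q_{ℓ,j} := the vector among q_0 := (0,0) and {q_{ℓ',j'} : ℓ' < ℓ} maximizing x_{ℓ,j}·q_{ℓ',j'}. Define gap_{ℓ,j} := x_{ℓ,j}·q_{ℓ,j} − max over q ∈ {q_0} ∪ {q_{ℓ',j'} : (ℓ',j') lexicographically before (ℓ,j)} of x_{ℓ,j}·q. Then for every even ℓ ≥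 2 and every 0 ≤ j ≤ n_ℓ−1, gap_{ℓ,j} = x_{ℓ,j}·q_{ℓ,j} − max{ x_{ℓ,j}·q_{ℓ−2,n_{ℓ−2}−1}, x_{ℓ,j}·q_{ℓ,j−1} }, where by convention q_{0,j'} := (0,0) and q_{ℓ,−1} := (0,0). -/

import Mathlib

open scoped BigOperators ENNReal NNReal

noncomputable section

namespace Stmt13

/-- Valuation / allocation vectors over 2 items. -/
abbrev V2 := Fin 2 → ℝ

/-- Dot product. -/
def dot (x y : V2) : ℝ := ∑ t, x t * y t

/-- ℓ¹ norm. -/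
def norm1 (x : V2) : ℝ := ∑ t, |x t|

/-- `n_ℓ := ℓ·⌈(ln ℓ)²⌉ + 1`. -/
def nl (l : ℕ) : ℕ := l * ⌈(Real.log l) ^ 2⌉₊ + 1

/-- `θ_ℓ := π / (2(n_ℓ − 1))`. -/
def θ (l : ℕ) : ℝ := Real.pi / (2 * ((nl l : ℝ) - 1))

/-- `α := ∑_{m=2}^∞ 1/(m (ln m)²)`. -/
def α : ℝ := ∑' m : ℕ, if 2 ≤ m then 1 / (m * (Real.log m) ^ 2) else 0

/-- `δ_ℓ := 1/(α ℓ (ln ℓ)²)`. -/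
def δ (l : ℕ) : ℝ := 1 / (α * l * (Real.log l) ^ 2)

/-- `cot x := cos x / sin x`. -/
def cot (x : ℝ) : ℝ := Real.cos x / Real.sin x

/-- `z_ℓ := ∑_{m=2}^ℓ δ_m`. -/
def zl (l : ℕ) : ℝ := ∑ m ∈ Finset.Icc 2 l, δ m

/-- `z_{ℓ,j} := 1 − δ_ℓ·cot((j+1)θ_ℓ)` for `j ≤ n_ℓ − 2`, and `z_{ℓ,n_ℓ−1} := 1`. -/
def zlj (l j : ℕ) : ℝ :=
  if j = nl l - 1 then 1 else 1 - δ l * cot (((j : ℝ) + 1) * θ l)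

/-- The point `x_{ℓ,j}` of the layered construction. -/
def xstar (p : ℕ × ℕ) : V2 :=
  if Even p.1 then ![Real.cos (p.2 * θ p.1), Real.sin (p.2 * θ p.1)]
  else ![Real.sin (p.2 * θ p.1), Real.cos (p.2 * θ p.1)]

/-- Valid (layer, position) indices: `ℓ ≥ 2`, `0 ≤ j ≤ n_ℓ − 1`. -/
def validIdx (p : ℕ × ℕ) : Prop := 2 ≤ p.1 ∧ p.2 < nl p.1

/-- Lexicographic order on indices: `(ℓ',j')` comes before `(ℓ,j)`. -/
def lexBefore (p q : ℕ × ℕ) : Prop := p.1 < q.1 ∨ (p.1 = q.1 ∧ p.2 < q.2)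

/-- `Q` is the allocation sequence `Q*`: on even layers `q_{ℓ,j} = (z_ℓ, z_{ℓ,j})`;
on odd layers `q_{ℓ,j}` is a vector among `q_0 = (0,0)` and `{q_{ℓ',j'} : ℓ' < ℓ}`
maximizing `x_{ℓ,j}·q`. -/
def isQstar (Q : ℕ × ℕ → V2) : Prop :=
  (∀ p : ℕ × ℕ, validIdx p → Even p.1 → Q p = ![zl p.1, zlj p.1 p.2]) ∧
  (∀ p : ℕ × ℕ, validIdx p → ¬ Even p.1 →
    (Q p = 0 ∨ ∃ p', validIdx p' ∧ p'.1 < p.1 ∧ Q p = Q p') ∧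
    (∀ p', validIdx p' → p'.1 < p.1 → dot (xstar p) (Q p') ≤ dot (xstar p) (Q p)) ∧
    0 ≤ dot (xstar p) (Q p))

/-- `gap_{ℓ,j} := x_{ℓ,j}·q_{ℓ,j} − max_{q} x_{ℓ,j}·q`, the maximum over `q_0 = (0,0)`
and all `q_{ℓ',j'}` with `(ℓ',j')` lexicographically before `(ℓ,j)`. -/
def gapStar (Q : ℕ × ℕ → V2) (p : ℕ × ℕ) : ℝ :=
  dot (xstar p) (Q p) -
    sSup (insert (0 : ℝ)
      {y | ∃ p', validIdx p' ∧ lexBefore p' p ∧ y = dot (xstar p) (Q p')})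

lemma two_le_nl {l : ℕ} (hl : 2 ≤ l) : 2 ≤ nl l := by
  have h0 : (0:ℝ) < (Real.log l) ^ 2 := by
    have : (0:ℝ) < Real.log l := Real.log_pos (by exact_mod_cast hl)
    positivity
  have h1 : 1 ≤ ⌈(Real.log l) ^ 2⌉₊ := Nat.one_le_ceil_iff.mpr h0
  have : 2 * 1 ≤ l * ⌈(Real.log l) ^ 2⌉₊ := Nat.mul_le_mul hl h1
  simp [nl]; omega

lemma nl_sub_one_pos {l : ℕ} (hl : 2 ≤ l) : (0:ℝ) < (nl l : ℝ) - 1 := by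
  have := two_le_nl hl
  have : (2:ℝ) ≤ (nl l : ℝ) := by exact_mod_cast this
  linarith

lemma θ_pos {l : ℕ} (hl : 2 ≤ l) : 0 < θ l :=
  div_pos Real.pi_pos (by have := nl_sub_one_pos hl; linarith)

lemma angle_le {l j : ℕ} (hl : 2 ≤ l) (hj : (j:ℝ) ≤ (nl l : ℝ) - 1) :
    (j : ℝ) * θ l ≤ Real.pi / 2 := by
  have hN := nl_sub_one_pos hl
  have h1 : (j:ℝ) * θ l ≤ ((nl l : ℝ) - 1) * θ l :=
    mul_le_mul_of_nonneg_right hj (θ_pos hl).le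
  have h2 : ((nl l : ℝ) - 1) * θ l = Real.pi / 2 := by
    rw [θ]; field_simp
  linarith

lemma cast_le_nl_sub_one {l j : ℕ} (hj : j < nl l) : (j:ℝ) ≤ (nl l : ℝ) - 1 := by
  have : j + 1 ≤ nl l := hj
  have : ((j:ℝ) + 1) ≤ (nl l : ℝ) := by exact_mod_cast this
  linarith

lemma cot_nonneg {a : ℝ} (h0 : 0 < a) (h1 : a ≤ Real.pi / 2) : 0 ≤ cot a := by
  have hs : 0 < Real.sin a := Real.sin_pos_of_pos_of_lt_pi h0
    (lt_of_le_of_lt h1 (by linarith [Real.pi_pos]))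
  have hc : 0 ≤ Real.cos a := Real.cos_nonneg_of_mem_Icc ⟨by linarith, h1⟩
  exact div_nonneg hc hs.le

lemma cot_anti {a b : ℝ} (h0 : 0 < a) (hab : a ≤ b) (hb : b ≤ Real.pi / 2) :
    cot b ≤ cot a := by
  have hsa : 0 < Real.sin a := Real.sin_pos_of_pos_of_lt_pi h0
    (by linarith [Real.pi_pos])
  have hsb : 0 < Real.sin b := Real.sin_pos_of_pos_of_lt_pi (lt_of_lt_of_le h0 hab)
    (by linarith [Real.pi_pos])
  have hca : 0 ≤ Real.cos a := Real.cos_nonneg_of_mem_Icc ⟨by linarith, by linarith⟩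
  have hcc : Real.cos b ≤ Real.cos a :=
    Real.cos_le_cos_of_nonneg_of_le_pi h0.le (by linarith [Real.pi_pos]) hab
  have hss : Real.sin a ≤ Real.sin b := by
    have := Real.strictMonoOn_sin.monotoneOn (a := a) (b := b)
      ⟨by linarith, by linarith⟩ ⟨by linarith, hb⟩ hab
    exact this
  exact div_le_div₀ hca hcc hsa hss

lemma α_nonneg : 0 ≤ α := tsum_nonneg (fun m => by positivity)

lemma δ_nonneg (l : ℕ) : 0 ≤ δ l := by
  have := α_nonneg
  have : 0 ≤ α * l * (Real.log l) ^ 2 := by positivity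
  exact one_div_nonneg.mpr this

lemma zl_nonneg (l : ℕ) : 0 ≤ zl l :=
  Finset.sum_nonneg fun m _ => δ_nonneg m

lemma zl_mono {l l' : ℕ} (h : l ≤ l') : zl l ≤ zl l' :=
  Finset.sum_le_sum_of_subset_of_nonneg (Finset.Icc_subset_Icc_right h)
    (fun m _ _ => δ_nonneg m)

lemma zlj_le_one {l j : ℕ} (hl : 2 ≤ l) (hj : j < nl l) : zlj l j ≤ 1 := by
  unfold zlj
  split
  · exact le_refl 1
  · rename_i hne
    have hjlt : j + 1 < nl l := by omega
    have hle : ((j:ℝ) + 1) ≤ (nl l : ℝ) - 1 := by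
      have := cast_le_nl_sub_one (l := l) (j := j + 1) hjlt
      push_cast at this; linarith
    have h0 : 0 < ((j:ℝ) + 1) * θ l := by
      have := θ_pos hl; positivity
    have hcot : 0 ≤ cot (((j:ℝ) + 1) * θ l) :=
      cot_nonneg h0 (by have := angle_le (l := l) (j := j + 1) hl (by push_cast; linarith); push_cast at this; linarith)
    nlinarith [δ_nonneg l]

lemma zlj_mono {l j j' : ℕ} (hl : 2 ≤ l) (hjj : j ≤ j') (hj' : j' < nl l) :
    zlj l j ≤ zlj l j' := by
  by_cases h' : j' = nl l - 1
  · rw [h']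
    have : zlj l (nl l - 1) = 1 := by rw [zlj, if_pos rfl]
    rw [this]
    exact zlj_le_one hl (by omega)
  · have hne : j ≠ nl l - 1 := by omega
    rw [zlj, if_neg hne, zlj, if_neg h']
    have hθ := θ_pos hl
    have h0 : 0 < ((j:ℝ) + 1) * θ l := by positivity
    have hle : ((j:ℝ) + 1) * θ l ≤ ((j':ℝ) + 1) * θ l := by
      have : (j:ℝ) ≤ (j':ℝ) := by exact_mod_cast hjj
      nlinarith
    have hub : ((j':ℝ) + 1) * θ l ≤ Real.pi / 2 := by
      have h1 : j' + 1 < nl l := by omega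
      have := angle_le (l := l) (j := j' + 1) hl (cast_le_nl_sub_one h1)
      push_cast at this; linarith
    have := cot_anti h0 hle hub
    nlinarith [δ_nonneg l]

lemma zlj_last (l : ℕ) : zlj l (nl l - 1) = 1 := by rw [zlj, if_pos rfl]


lemma dot_mono {x u v : V2} (hx : ∀ t, 0 ≤ x t) (huv : ∀ t, u t ≤ v t) :
    dot x u ≤ dot x v :=
  Finset.sum_le_sum fun t _ => mul_le_mul_of_nonneg_left (huv t) (hx t)

lemma dot_nonneg' {x v : V2} (hx : ∀ t, 0 ≤ x t) (hv : ∀ t, 0 ≤ v t) : 0 ≤ dot x v :=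
  Finset.sum_nonneg fun t _ => mul_nonneg (hx t) (hv t)

lemma xstar_nonneg {l j : ℕ} (hl : 2 ≤ l) (hle : Even l) (hj : j < nl l) :
    ∀ t, 0 ≤ xstar (l, j) t := by
  have h0 : 0 ≤ (j:ℝ) * θ l := mul_nonneg (Nat.cast_nonneg j) (θ_pos hl).le
  have h1 : (j:ℝ) * θ l ≤ Real.pi / 2 := angle_le hl (cast_le_nl_sub_one hj)
  have hc : 0 ≤ Real.cos ((j:ℝ) * θ l) := Real.cos_nonneg_of_mem_Icc ⟨by linarith, h1⟩
  have hs : 0 ≤ Real.sin ((j:ℝ) * θ l) :=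
    Real.sin_nonneg_of_nonneg_of_le_pi h0 (by linarith [Real.pi_pos])
  intro t
  rw [xstar, if_pos hle]
  fin_cases t
  · simpa using hc
  · simpa using hs

lemma rhs_nonneg {x : V2} (hx : ∀ t, 0 ≤ x t) (m : ℕ) :
    0 ≤ dot x ![zl m, zlj m (nl m - 1)] := by
  apply dot_nonneg' hx
  intro t; fin_cases t
  · simpa using zl_nonneg m
  · simp [zlj_last]

lemma even_layer_le {x : V2} (hx : ∀ t, 0 ≤ x t) {l' m : ℕ} (hl' : 2 ≤ l')
    (hlm : l' ≤ m) {j' : ℕ} (hj' : j' < nl l') :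
    dot x ![zl l', zlj l' j'] ≤ dot x ![zl m, zlj m (nl m - 1)] := by
  apply dot_mono hx
  intro t; fin_cases t
  · simpa using zl_mono hlm
  · rw [zlj_last]
    simpa using zlj_le_one hl' hj'

lemma key (Q : ℕ × ℕ → V2) (hQ : isQstar Q) {l j : ℕ} (hl : 2 ≤ l)
    (hleven : Even l) (hj : j < nl l) (hl4 : 4 ≤ l) :
    ∀ l', ∀ p' : ℕ × ℕ, validIdx p' → p'.1 = l' → l' < l →
      dot (xstar (l, j)) (Q p') ≤ dot (xstar (l, j)) (Q (l - 2, nl (l - 2) - 1)) := by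
  have hx := xstar_nonneg hl hleven hj
  have hl2 : 2 ≤ l - 2 := by omega
  have hl2e : Even (l - 2) := by
    obtain ⟨c, hc⟩ := hleven; exact ⟨c - 1, by omega⟩
  have hQl2 : Q (l - 2, nl (l - 2) - 1) = ![zl (l - 2), zlj (l - 2) (nl (l - 2) - 1)] :=
    hQ.1 (l - 2, nl (l - 2) - 1) ⟨hl2, show nl (l-2) - 1 < nl (l-2) by have := two_le_nl hl2; omega⟩ hl2e
  intro l'
  induction l' using Nat.strong_induction_on with
  | _ l' ih =>
    intro p' hp' hpl hlt
    by_cases he : Even p'.1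
    · rw [hQ.1 p' hp' he, hQl2]
      refine even_layer_le hx hp'.1 ?_ hp'.2
      obtain ⟨c, hc⟩ := he; obtain ⟨d, hd⟩ := hleven; omega
    · obtain ⟨hcase, -, -⟩ := hQ.2 p' hp' he
      rcases hcase with h0 | ⟨p'', hp'', hlt'', heq⟩
      · rw [h0]
        have h00 : dot (xstar (l, j)) (0 : V2) = 0 := by simp [dot]
        rw [h00, hQl2]
        exact rhs_nonneg hx _
      · rw [heq]
        exact ih p''.1 (by omega) p'' hp'' rfl (by omega)


theorem stmt13 (Q : ℕ × ℕ → V2) (hQ : isQstar Q) (l j : ℕ)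
    (hl : 2 ≤ l) (hleven : Even l) (hj : j < nl l) :
    gapStar Q (l, j) =
      dot (xstar (l, j)) (Q (l, j)) -
        max (if l = 2 then 0 else dot (xstar (l, j)) (Q (l - 2, nl (l - 2) - 1)))
            (if j = 0 then 0 else dot (xstar (l, j)) (Q (l, j - 1))) := by
  have hx := xstar_nonneg hl hleven hj
  rw [gapStar]
  congr 1
  set a := (if l = 2 then 0 else dot (xstar (l, j)) (Q (l - 2, nl (l - 2) - 1))) with ha
  set b := (if j = 0 then 0 else dot (xstar (l, j)) (Q (l, j - 1))) with hb
  have hl4 : l ≠ 2 → 4 ≤ l := by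
    intro hne; obtain ⟨c, hc⟩ := hleven; omega
  have ha_nonneg : 0 ≤ a := by
    rw [ha]; split
    · exact le_refl 0
    · rename_i hne
      have h4 := hl4 hne
      have hl2 : 2 ≤ l - 2 := by omega
      have hl2e : Even (l - 2) := by
        obtain ⟨c, hc⟩ := hleven; exact ⟨c - 1, by omega⟩
      rw [hQ.1 (l - 2, nl (l - 2) - 1) ⟨hl2, show nl (l-2) - 1 < nl (l-2) by have := two_le_nl hl2; omega⟩ hl2e]
      exact rhs_nonneg hx _
  have hub : ∀ y ∈ insert (0 : ℝ)
      {y | ∃ p', validIdx p' ∧ lexBefore p' (l, j) ∧ y = dot (xstar (l, j)) (Q p')},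
      y ≤ max a b := by
    intro y hy
    rw [Set.mem_insert_iff] at hy
    rcases hy with rfl | ⟨p', hp', hlex, rfl⟩
    · exact le_max_of_le_left ha_nonneg
    · rcases hlex with hlt | ⟨heq, hjlt⟩
      · have hne : l ≠ 2 := by have := hp'.1; omega
        refine le_trans (key Q hQ hl hleven hj (hl4 hne) p'.1 p' hp' rfl hlt) ?_
        rw [ha, if_neg hne]
        exact le_max_left _ _
      · obtain ⟨l', j'⟩ := p'
        simp only at heq hjlt
        subst heq
        have hj0 : j ≠ 0 := by omega
        refine le_trans ?_ (le_max_right a b)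
        have hp2 : j' < nl l' := hp'.2
        rw [hb, if_neg hj0, hQ.1 (l', j') hp' hleven,
          hQ.1 (l', j - 1) ⟨hl, show j - 1 < nl l' by omega⟩ hleven]
        apply dot_mono hx
        intro t; fin_cases t
        · simp
        · simpa using zlj_mono hl (by omega : j' ≤ j - 1) (by omega)
  have hmem : max a b ∈ insert (0 : ℝ)
      {y | ∃ p', validIdx p' ∧ lexBefore p' (l, j) ∧ y = dot (xstar (l, j)) (Q p')} := by
    rcases le_total a b with h | h
    · rw [max_eq_right h, hb]
      split
      · exact Set.mem_insert _ _
      · rename_i hne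
        exact Set.mem_insert_of_mem _
          ⟨(l, j - 1), ⟨hl, show j - 1 < nl l by omega⟩, Or.inr ⟨rfl, by omega⟩, rfl⟩
    · rw [max_eq_left h, ha]
      split
      · exact Set.mem_insert _ _
      · rename_i hne
        have h4 := hl4 hne
        have hl2 : 2 ≤ l - 2 := by omega
        exact Set.mem_insert_of_mem _
          ⟨(l - 2, nl (l - 2) - 1), ⟨hl2, show nl (l-2) - 1 < nl (l-2) by have := two_le_nl hl2; omega⟩,
            Or.inl (by omega), rfl⟩
  exact le_antisymm (csSup_le ⟨0, Set.mem_insert _ _⟩ hub) (le_csSup ⟨max a b, hub⟩ hmem)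


end Stmt13
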